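/- For real numbers m ∉ {0,1} and c ≠ 0, the mean curvature H of the surface x_{m,c}(r,θ) = (r cos θ, r sin θ, c r^m cos mθ), computed with respect to the unit normal n = (x_r × x_θ)/‖x_r × x_θ‖, is given at every point (r,θ) ∈ (0,∞) × ℝ by H = − c³ m³ (m−1) r^{3m−4} cos mθ / ( 2 (1 + c² m² r^{2m−2})^{3/2} ). -/

import Mathlib

noncomputable section

/-- Cross product on ℝ³ represented as `ℝ × ℝ × ℝ`. -/
def cross3 (u v : ℝ × ℝ × ℝ) : ℝ × ℝ × ℝ :=
  (u.2.1 * v.2.2 - u.2.2 * v.2.1,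
   u.2.2 * v.1 - u.1 * v.2.2,
   u.1 * v.2.1 - u.2.1 * v.1)

/-- Dot product on ℝ³. -/
def dot3 (u v : ℝ × ℝ × ℝ) : ℝ :=
  u.1 * v.1 + u.2.1 * v.2.1 + u.2.2 * v.2.2

/-- Euclidean norm on ℝ³. -/
def norm3 (u : ℝ × ℝ × ℝ) : ℝ := Real.sqrt (dot3 u u)

lemma dot3_smul (a : ℝ) (u v : ℝ × ℝ × ℝ) : dot3 u (a • v) = a * dot3 u v := by
  simp only [dot3, Prod.smul_fst, Prod.smul_snd, smul_eq_mul]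
  ring

/-- For `m ∉ {0,1}` and `c ≠ 0`, the mean curvature of
`x_{m,c}(r,θ) = (r cos θ, r sin θ, c r^m cos mθ)` with respect to
`n = (x_r × x_θ)/‖x_r × x_θ‖` is
`H = − c³ m³ (m−1) r^{3m−4} cos mθ / (2 (1 + c² m² r^{2m−2})^{3/2})`. -/
theorem stmt_4 (m c : ℝ) (hm0 : m ≠ 0) (hm1 : m ≠ 1) (hc : c ≠ 0) :
    ∀ r θ : ℝ, 0 < r →
      let x : ℝ → ℝ → ℝ × ℝ × ℝ :=
        fun s t => (s * Real.cos t, s * Real.sin t, c * s ^ m * Real.cos (m * t))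
      let xr := deriv (fun s' => x s' θ) r
      let xθ := deriv (fun t' => x r t') θ
      let xrr := deriv (fun s' => deriv (fun s'' => x s'' θ) s') r
      let xrθ := deriv (fun t' => deriv (fun s' => x s' t') r) θ
      let xθθ := deriv (fun t' => deriv (fun t'' => x r t'') t') θ
      let n := (norm3 (cross3 xr xθ))⁻¹ • cross3 xr xθ
      let E := dot3 xr xr
      let Ft := dot3 xr xθ
      let G := dot3 xθ xθ
      let e := dot3 xrr n
      let f := dot3 xrθ n
      let g := dot3 xθθ n
      let H := (e * G - 2 * f * Ft + g * E) / (2 * (E * G - Ft ^ 2))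
      H = -(c ^ 3 * m ^ 3 * (m - 1) * r ^ (3 * m - 4) * Real.cos (m * θ)) /
        (2 * (1 + c ^ 2 * m ^ 2 * r ^ (2 * m - 2)) ^ ((3 : ℝ) / 2)) := by
  intro r θ hr
  have hr0 : r ≠ 0 := hr.ne'
  -- derivative in the radial direction, at any point s > 0 and any angle t
  have hds : ∀ t : ℝ, ∀ s : ℝ, 0 < s →
      HasDerivAt (fun s' : ℝ =>
          ((s' * Real.cos t, s' * Real.sin t, c * s' ^ m * Real.cos (m * t)) : ℝ × ℝ × ℝ))
        ((Real.cos t, Real.sin t, c * (m * s ^ (m - 1)) * Real.cos (m * t))) s := by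
    intro t s hs
    have h3 : HasDerivAt (fun s' : ℝ => c * s' ^ m * Real.cos (m * t))
        (c * (m * s ^ (m - 1)) * Real.cos (m * t)) s :=
      ((Real.hasDerivAt_rpow_const (Or.inl hs.ne')).const_mul c).mul_const _
    exact (hasDerivAt_mul_const (Real.cos t)).prodMk
      ((hasDerivAt_mul_const (Real.sin t)).prodMk h3)
  -- derivative in the angular direction
  have hmt : ∀ t : ℝ, HasDerivAt (fun t' : ℝ => m * t') (m * 1) t :=
    fun t => (hasDerivAt_id t).const_mul m
  have hdt : ∀ s t : ℝ,
      HasDerivAt (fun t' : ℝ =>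
          ((s * Real.cos t', s * Real.sin t', c * s ^ m * Real.cos (m * t')) : ℝ × ℝ × ℝ))
        ((s * -Real.sin t, s * Real.cos t, c * s ^ m * (-Real.sin (m * t) * (m * 1)))) t := by
    intro s t
    exact ((Real.hasDerivAt_cos t).const_mul s).prodMk
      (((Real.hasDerivAt_sin t).const_mul s).prodMk
        (((Real.hasDerivAt_cos (m * t)).comp t (hmt t)).const_mul (c * s ^ m)))
  -- second radial derivative
  have hds2 : HasDerivAt (fun s' : ℝ =>
        ((Real.cos θ, Real.sin θ, c * (m * s' ^ (m - 1)) * Real.cos (m * θ)) : ℝ × ℝ × ℝ))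
      ((0, 0, c * (m * ((m - 1) * r ^ (m - 1 - 1))) * Real.cos (m * θ))) r := by
    have h3 : HasDerivAt (fun s' : ℝ => c * (m * s' ^ (m - 1)) * Real.cos (m * θ))
        (c * (m * ((m - 1) * r ^ (m - 1 - 1))) * Real.cos (m * θ)) r :=
      (((Real.hasDerivAt_rpow_const (Or.inl hr0)).const_mul m).const_mul c).mul_const _
    exact (hasDerivAt_const r _).prodMk ((hasDerivAt_const r _).prodMk h3)
  -- mixed derivative
  have hdrθ : HasDerivAt (fun t' : ℝ =>
        ((Real.cos t', Real.sin t', c * (m * r ^ (m - 1)) * Real.cos (m * t')) : ℝ × ℝ × ℝ))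
      ((-Real.sin θ, Real.cos θ, c * (m * r ^ (m - 1)) * (-Real.sin (m * θ) * (m * 1)))) θ :=
    (Real.hasDerivAt_cos θ).prodMk ((Real.hasDerivAt_sin θ).prodMk
      (((Real.hasDerivAt_cos (m * θ)).comp θ (hmt θ)).const_mul _))
  -- second angular derivative
  have hdθθ : HasDerivAt (fun t' : ℝ =>
        ((r * -Real.sin t', r * Real.cos t',
          c * r ^ m * (-Real.sin (m * t') * (m * 1))) : ℝ × ℝ × ℝ))
      ((r * -Real.cos θ, r * -Real.sin θ,
        c * r ^ m * (-(Real.cos (m * θ) * (m * 1)) * (m * 1)))) θ :=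
    (((Real.hasDerivAt_sin θ).neg).const_mul r).prodMk
      (((Real.hasDerivAt_cos θ).const_mul r).prodMk
        (((((Real.hasDerivAt_sin (m * θ)).comp θ (hmt θ)).neg).mul_const (m * 1)).const_mul _))
  dsimp only
  rw [(hds θ r hr).deriv, (hdt r θ).deriv]
  have hev : (fun s' : ℝ => deriv (fun s'' : ℝ =>
        ((s'' * Real.cos θ, s'' * Real.sin θ, c * s'' ^ m * Real.cos (m * θ)) : ℝ × ℝ × ℝ)) s')
      =ᶠ[nhds r] (fun s' : ℝ =>
        ((Real.cos θ, Real.sin θ, c * (m * s' ^ (m - 1)) * Real.cos (m * θ)) : ℝ × ℝ × ℝ)) := by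
    filter_upwards [eventually_gt_nhds hr] with s hs using (hds θ s hs).deriv
  rw [hev.deriv_eq, hds2.deriv]
  rw [show (fun t' : ℝ => deriv (fun s' : ℝ =>
        ((s' * Real.cos t', s' * Real.sin t', c * s' ^ m * Real.cos (m * t')) : ℝ × ℝ × ℝ)) r)
      = (fun t' : ℝ =>
        ((Real.cos t', Real.sin t', c * (m * r ^ (m - 1)) * Real.cos (m * t')) : ℝ × ℝ × ℝ))
    from funext fun t' => (hds t' r hr).deriv, hdrθ.deriv]
  rw [show (fun t' : ℝ => deriv (fun t'' : ℝ =>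
        ((r * Real.cos t'', r * Real.sin t'', c * r ^ m * Real.cos (m * t'')) : ℝ × ℝ × ℝ)) t')
      = (fun t' : ℝ => ((r * -Real.sin t', r * Real.cos t',
          c * r ^ m * (-Real.sin (m * t') * (m * 1))) : ℝ × ℝ × ℝ))
    from funext fun t' => (hdt r t').deriv, hdθθ.deriv]
  -- rewrite real powers in terms of P = r ^ (m-1)
  have hm' : r ^ m = r ^ (m - 1) * r := by
    rw [← Real.rpow_add_one hr0]; congr 1; ring
  have hm2 : r ^ (m - 1 - 1) = r ^ (m - 1) * r⁻¹ := by
    rw [show m - 1 - 1 = (m - 1) + (-1) by ring, Real.rpow_add hr, Real.rpow_neg_one]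
  have h2m : r ^ (2 * m - 2) = (r ^ (m - 1)) ^ (2 : ℕ) := by
    rw [← Real.rpow_natCast (r ^ (m - 1)) 2, ← Real.rpow_mul hr.le]
    norm_num
    congr 1; ring
  have h3m : r ^ (3 * m - 4) = (r ^ (m - 1)) ^ (3 : ℕ) * r⁻¹ := by
    rw [← Real.rpow_natCast (r ^ (m - 1)) 3, ← Real.rpow_mul hr.le,
      ← Real.rpow_neg_one r, ← Real.rpow_add hr]
    congr 1; ring
  rw [hm', hm2, h2m, h3m]
  set P := r ^ (m - 1) with hP
  set K := Real.cos (m * θ) with hK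
  set S := Real.sin (m * θ) with hS
  set cθ := Real.cos θ with hcθ
  set sθ := Real.sin θ with hsθ
  have hθ : sθ ^ 2 + cθ ^ 2 = 1 := by rw [hsθ, hcθ]; exact Real.sin_sq_add_cos_sq θ
  have hmθ : S ^ 2 + K ^ 2 = 1 := by rw [hS, hK]; exact Real.sin_sq_add_cos_sq (m * θ)
  have hW : (0 : ℝ) < 1 + c ^ 2 * m ^ 2 * P ^ 2 := by positivity
  set sW := Real.sqrt (1 + c ^ 2 * m ^ 2 * P ^ 2) with hsW
  have hsWpos : 0 < sW := Real.sqrt_pos.mpr hW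
  have hsW2 : sW ^ 2 = 1 + c ^ 2 * m ^ 2 * P ^ 2 := Real.sq_sqrt hW.le
  have hcr : cross3 (cθ, sθ, c * (m * P) * K)
      (r * -sθ, r * cθ, c * (P * r) * (-S * (m * 1)))
      = (-(c * m * P * r * (S * sθ + K * cθ)), c * m * P * r * (S * cθ - K * sθ), r) := by
    simp only [cross3, Prod.mk.injEq]
    refine ⟨by ring, by ring, by linear_combination r * hθ⟩
  rw [hcr]
  have hnorm : norm3 (-(c * m * P * r * (S * sθ + K * cθ)), c * m * P * r * (S * cθ - K * sθ), r)
      = r * sW := by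
    simp only [norm3, dot3]
    rw [show -(c * m * P * r * (S * sθ + K * cθ)) * -(c * m * P * r * (S * sθ + K * cθ))
        + c * m * P * r * (S * cθ - K * sθ) * (c * m * P * r * (S * cθ - K * sθ)) + r * r
        = r ^ 2 * (1 + c ^ 2 * m ^ 2 * P ^ 2) from by
      linear_combination (c ^ 2 * m ^ 2 * P ^ 2 * r ^ 2 * (sθ ^ 2 + cθ ^ 2)) * hmθ
        + (c ^ 2 * m ^ 2 * P ^ 2 * r ^ 2) * hθ]
    rw [hsW, Real.sqrt_mul (sq_nonneg r), Real.sqrt_sq hr.le]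
  rw [hnorm, dot3_smul, dot3_smul, dot3_smul]
  have hE : dot3 (cθ, sθ, c * (m * P) * K) (cθ, sθ, c * (m * P) * K)
      = 1 + c ^ 2 * m ^ 2 * P ^ 2 * K ^ 2 := by
    simp only [dot3]; linear_combination hθ
  have hFt : dot3 (cθ, sθ, c * (m * P) * K) (r * -sθ, r * cθ, c * (P * r) * (-S * (m * 1)))
      = -(c ^ 2 * m ^ 2 * P ^ 2 * r * (K * S)) := by
    simp only [dot3]; ring
  have hG : dot3 (r * -sθ, r * cθ, c * (P * r) * (-S * (m * 1)))
      (r * -sθ, r * cθ, c * (P * r) * (-S * (m * 1)))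
      = r ^ 2 + c ^ 2 * m ^ 2 * P ^ 2 * r ^ 2 * S ^ 2 := by
    simp only [dot3]; linear_combination (r ^ 2) * hθ
  have hev2 : dot3 (0, 0, c * (m * ((m - 1) * (P * r⁻¹))) * K)
      (-(c * m * P * r * (S * sθ + K * cθ)), c * m * P * r * (S * cθ - K * sθ), r)
      = c * m * (m - 1) * P * K := by
    simp only [dot3]
    have hinv : r⁻¹ * r = 1 := inv_mul_cancel₀ hr0
    linear_combination (c * m * (m - 1) * P * K) * hinv
  have hfv : dot3 (-sθ, cθ, c * (m * P) * (-S * (m * 1)))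
      (-(c * m * P * r * (S * sθ + K * cθ)), c * m * P * r * (S * cθ - K * sθ), r)
      = c * m * (1 - m) * P * r * S := by
    simp only [dot3]; linear_combination (c * m * P * r * S) * hθ
  have hgv : dot3 (r * -cθ, r * -sθ, c * (P * r) * (-(K * (m * 1)) * (m * 1)))
      (-(c * m * P * r * (S * sθ + K * cθ)), c * m * P * r * (S * cθ - K * sθ), r)
      = c * m * (1 - m) * P * r ^ 2 * K := by
    simp only [dot3]; linear_combination (c * m * P * r ^ 2 * K) * hθ
  rw [hE, hFt, hG, hev2, hfv, hgv]
  have hden : (1 + c ^ 2 * m ^ 2 * P ^ 2 * K ^ 2)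
      * (r ^ 2 + c ^ 2 * m ^ 2 * P ^ 2 * r ^ 2 * S ^ 2)
      - (-(c ^ 2 * m ^ 2 * P ^ 2 * r * (K * S))) ^ 2 = r ^ 2 * sW ^ 2 := by
    linear_combination (r ^ 2 * c ^ 2 * m ^ 2 * P ^ 2) * hmθ + (-(r ^ 2)) * hsW2
  have hnum : (r * sW)⁻¹ * (c * m * (m - 1) * P * K)
        * (r ^ 2 + c ^ 2 * m ^ 2 * P ^ 2 * r ^ 2 * S ^ 2)
      - 2 * ((r * sW)⁻¹ * (c * m * (1 - m) * P * r * S))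
        * -(c ^ 2 * m ^ 2 * P ^ 2 * r * (K * S))
      + (r * sW)⁻¹ * (c * m * (1 - m) * P * r ^ 2 * K)
        * (1 + c ^ 2 * m ^ 2 * P ^ 2 * K ^ 2)
      = -(c ^ 3 * m ^ 3 * (m - 1) * P ^ 3 * r ^ 2 * K) * (r * sW)⁻¹ := by
    field_simp
    linear_combination (-(c ^ 2 * m ^ 2 * (m - 1) * P ^ 3 * K)) * hmθ
  rw [hnum, hden]
  have hW32 : (1 + c ^ 2 * m ^ 2 * P ^ 2) ^ ((3 : ℝ) / 2) = sW ^ 3 := by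
    rw [show (3 : ℝ) / 2 = (1 / 2) * ((3 : ℕ) : ℝ) by norm_num, Real.rpow_mul hW.le,
      Real.rpow_natCast, hsW, ← Real.sqrt_eq_rpow]
  rw [hW32]
  field_simp
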